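/- Let 0 < p < ∞ and let u, w be weights on ℝ and (0,∞) respectively. Suppose there is a constant C such that for every b > 0, ‖Hχ_(0,b)‖_{Λ^{p,∞}_u(w)} ≤ C ‖χ_(0,b)‖_{Λ^p_u(w)}. Then there is a constant C′ such that for every ν ∈ (0,1] and every b > 0, W(∫_{−bν}^{bν} u(s) ds) ≤ C′ (1 + log(1/ν))^{−p} · W(∫_{−b}^{b} u(s) ds). -/

import Mathlib

open MeasureTheory Filter Topology
open scoped ENNReal NNReal

noncomputable section

/-- The `u`-measure of a set `E`, `u(E) = ∫_E u`, as an extended nonnegative real. -/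
def wMeas (u : ℝ → ℝ) (E : Set ℝ) : ℝ≥0∞ := ∫⁻ x in E, ENNReal.ofReal (u x)

/-- The `u`-measure of a set `E`, `u(E) = ∫_E u(x) dx`, as a real number. -/
def wInt (u : ℝ → ℝ) (E : Set ℝ) : ℝ := ∫ x in E, u x

/-- `W(r) = ∫_0^r w(s) ds`. -/
def Wf (w : ℝ → ℝ) (r : ℝ) : ℝ := ∫ t in Set.Ioo (0:ℝ) r, w t

/-- A weight on `ℝ`: a positive locally integrable function. -/
def IsWeight (u : ℝ → ℝ) : Prop :=
  (∀ x, 0 < u x) ∧ MeasureTheory.LocallyIntegrable u volume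

/-- A weight on `(0,∞)`: positive there and locally integrable on `(0,r)` for every `r > 0`. -/
def IsWeightOn (w : ℝ → ℝ) : Prop :=
  (∀ t, 0 < t → 0 < w t) ∧ ∀ r, 0 < r → MeasureTheory.IntegrableOn w (Set.Ioo (0:ℝ) r) volume

/-- Decreasing rearrangement (with respect to the weight `u`) of an `ℝ≥0∞`-valued function. -/
def rearrE (u : ℝ → ℝ) (g : ℝ → ℝ≥0∞) (t : ℝ) : ℝ≥0∞ :=
  sInf {s : ℝ≥0∞ | wMeas u {x | s < g x} ≤ ENNReal.ofReal t}

/-- Decreasing rearrangement `f*_u` of `f` with respect to the weight `u`. -/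
def rearr (u f : ℝ → ℝ) (t : ℝ) : ℝ≥0∞ :=
  rearrE u (fun x => ENNReal.ofReal |f x|) t

/-- The quasinorm of `Λ^p_u(w)` for `ℝ≥0∞`-valued functions. -/
def lorentzNormE (p : ℝ) (u w : ℝ → ℝ) (g : ℝ → ℝ≥0∞) : ℝ≥0∞ :=
  (∫⁻ t in Set.Ioi (0:ℝ), rearrE u g t ^ p * ENNReal.ofReal (w t)) ^ (1/p)

/-- The quasinorm of the weighted Lorentz space `Λ^p_u(w)`. -/
def lorentzNorm (p : ℝ) (u w f : ℝ → ℝ) : ℝ≥0∞ :=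
  lorentzNormE p u w (fun x => ENNReal.ofReal |f x|)

/-- The quasinorm of `Λ^{p,∞}_u(w)` for `ℝ≥0∞`-valued functions. -/
def weakLorentzNormE (p : ℝ) (u w : ℝ → ℝ) (g : ℝ → ℝ≥0∞) : ℝ≥0∞ :=
  ⨆ t ∈ Set.Ioi (0:ℝ), ENNReal.ofReal (Wf w t) ^ (1/p) * rearrE u g t

/-- The quasinorm of the weak weighted Lorentz space `Λ^{p,∞}_u(w)`. -/
def weakLorentzNorm (p : ℝ) (u w f : ℝ → ℝ) : ℝ≥0∞ :=
  weakLorentzNormE p u w (fun x => ENNReal.ofReal |f x|)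

/-- Membership in `Λ^p_u(w)`. -/
def MemLambda (p : ℝ) (u w f : ℝ → ℝ) : Prop :=
  Measurable f ∧ lorentzNorm p u w f < ∞

/-- The quasinorm of the Lorentz space `L^{p,q}(u)`, `0 < q ≤ ∞`. -/
def lpqNorm (p : ℝ) (q : ℝ≥0∞) (u f : ℝ → ℝ) : ℝ≥0∞ :=
  if q = ∞ then ⨆ t ∈ Set.Ioi (0:ℝ), ENNReal.ofReal t ^ (1/p) * rearr u f t
  else (∫⁻ t in Set.Ioi (0:ℝ),
      (ENNReal.ofReal t ^ (1/p) * rearr u f t) ^ q.toReal / ENNReal.ofReal t) ^ (1/q.toReal)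

/-- Membership in `L^{p,q}(u)`. -/
def MemLpq (p : ℝ) (q : ℝ≥0∞) (u f : ℝ → ℝ) : Prop :=
  Measurable f ∧ lpqNorm p q u f < ∞

/-- The associate norm `‖g‖_{(Λ^p_u(w))'}`. -/
def assocNorm (p : ℝ) (u w g : ℝ → ℝ) : ℝ≥0∞ :=
  ⨆ (f : ℝ → ℝ) (_ : MemLambda p u w f) (_ : lorentzNorm p u w f ≠ 0),
    ENNReal.ofReal |∫ x, f x * g x * u x| / lorentzNorm p u w f

/-- The truncated Hilbert integral `∫_{|x−y|>ε} f(y)/(x−y) dy`. -/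
def pvIntegral (f : ℝ → ℝ) (x ε : ℝ) : ℝ :=
  ∫ y in {y : ℝ | ε < |x - y|}, f y / (x - y)

/-- The principal value limit defining `Hf(x)` exists and equals `L`. -/
def HasHilbert (f : ℝ → ℝ) (x L : ℝ) : Prop :=
  Filter.Tendsto (fun ε : ℝ => (1 / Real.pi) * pvIntegral f x ε) (𝓝[>] 0) (𝓝 L)

/-- The Hilbert transform `Hf(x)` (junk value where the principal value does not exist). -/
def hilbert (f : ℝ → ℝ) (x : ℝ) : ℝ :=
  limUnder (𝓝[>] (0:ℝ)) (fun ε => (1 / Real.pi) * pvIntegral f x ε)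

/-- The Hilbert maximal operator `H*f(x)`. -/
def hilbertMax (f : ℝ → ℝ) (x : ℝ) : ℝ≥0∞ :=
  ⨆ ε ∈ Set.Ioi (0:ℝ), ENNReal.ofReal ((1 / Real.pi) * |pvIntegral f x ε|)

/-- The Hardy–Littlewood maximal operator over intervals of `ℝ`. -/
def maxOp (u : ℝ → ℝ) (x : ℝ) : ℝ≥0∞ :=
  ⨆ (a : ℝ) (b : ℝ) (_ : x ∈ Set.Ioo a b),
    (∫⁻ y in Set.Ioo a b, ENNReal.ofReal |u y|) / ENNReal.ofReal (b - a)

/-- The Muckenhoupt class `A_1`: `Mu ≤ C u` a.e. -/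
def A1 (u : ℝ → ℝ) : Prop :=
  ∃ C : ℝ, 0 < C ∧ ∀ᵐ x : ℝ ∂volume, maxOp u x ≤ ENNReal.ofReal (C * u x)

/-- The Muckenhoupt class `A_p`, `p > 1`. -/
def Ap (p : ℝ) (u : ℝ → ℝ) : Prop :=
  ∃ C : ℝ, 0 < C ∧ ∀ a b : ℝ, a < b →
    ((∫⁻ x in Set.Ioo a b, ENNReal.ofReal (u x)) / ENNReal.ofReal (b - a)) *
      ((∫⁻ x in Set.Ioo a b, ENNReal.ofReal (u x ^ (-1 / (p - 1)))) /
        ENNReal.ofReal (b - a)) ^ (p - 1)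
      ≤ ENNReal.ofReal C

/-- The class `B_p`: `∫_r^∞ (r/t)^p w(t) dt ≤ C W(r)`. -/
def Bp (p : ℝ) (w : ℝ → ℝ) : Prop :=
  ∃ C : ℝ, 0 < C ∧ ∀ r : ℝ, 0 < r →
    (∫⁻ t in Set.Ioi r, ENNReal.ofReal ((r / t) ^ p * w t)) ≤ ENNReal.ofReal (C * Wf w r)

/-- The class `B_{p,∞}`: the Hardy operator maps `L^p_dec(w)` to `L^{p,∞}(w)`. -/
def BpInfty (p : ℝ) (w : ℝ → ℝ) : Prop :=
  ∃ C : ℝ, 0 < C ∧ ∀ f : ℝ → ℝ, (∀ t, 0 < t → 0 ≤ f t) → AntitoneOn f (Set.Ioi 0) →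
    ∀ t : ℝ, 0 < t →
      ENNReal.ofReal (Wf w t) ^ (1/p) *
          ((∫⁻ s in Set.Ioo (0:ℝ) t, ENNReal.ofReal (f s)) / ENNReal.ofReal t)
        ≤ ENNReal.ofReal C *
            (∫⁻ s in Set.Ioi (0:ℝ), ENNReal.ofReal (f s) ^ p * ENNReal.ofReal (w s)) ^ (1/p)

/-- The class `B*_∞`: `∫_0^r W(t)/t dt ≤ C W(r)`. -/
def BstarInfty (w : ℝ → ℝ) : Prop :=
  ∃ C : ℝ, 0 < C ∧ ∀ r : ℝ, 0 < r →
    (∫⁻ t in Set.Ioo (0:ℝ) r, ENNReal.ofReal (Wf w t / t)) ≤ ENNReal.ofReal (C * Wf w r)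

/-- The `Δ_2` condition: `W(2r) ≤ C W(r)`. -/
def Delta2 (w : ℝ → ℝ) : Prop :=
  ∃ C : ℝ, 0 < C ∧ ∀ r : ℝ, 0 < r → Wf w (2 * r) ≤ C * Wf w r

/-- A doubling weight on `ℝ`: `u(2I) ≤ C u(I)` for every bounded interval `I`. -/
def DoublingWeight (u : ℝ → ℝ) : Prop :=
  ∃ C : ℝ, 0 < C ∧ ∀ c r : ℝ, 0 < r →
    wInt u (Set.Ioo (c - 2*r) (c + 2*r)) ≤ C * wInt u (Set.Ioo (c - r) (c + r))

/-- `φ_I(t) = sup{|E| : E ⊆ I, u(E) = t}` for `I = (a,b)`. -/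
def phiI (u : ℝ → ℝ) (a b t : ℝ) : ℝ :=
  sSup {m : ℝ | ∃ E : Set ℝ, MeasurableSet E ∧ E ⊆ Set.Ioo a b ∧
    wInt u E = t ∧ (volume E).toReal = m}

/-- The index `p_w`:  `inf{p > 0 : t^p/W(t) ∈ L^{p'-1}((0,1), dt/t)}`, where for `p ≤ 1`
(`p' = ∞`) the condition means essential boundedness on `(0,1)`. -/
def pwIndex (w : ℝ → ℝ) : ℝ :=
  sInf {p : ℝ | 0 < p ∧
    ((p ≤ 1 ∧ ∃ C : ℝ, ∀ᵐ t ∂(volume.restrict (Set.Ioo (0:ℝ) 1)), t ^ p / Wf w t ≤ C) ∨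
     (1 < p ∧ (∫⁻ t in Set.Ioo (0:ℝ) 1,
        ENNReal.ofReal ((t ^ p / Wf w t) ^ (1 / (p - 1)) / t)) < ∞))}

open intervalIntegral in
lemma helper_inv (x c d : ℝ) (h : 0 ∉ Set.uIcc (x-d) (x-c)) :
    ∫ y in c..d, (x-y)⁻¹ = Real.log ((x-c)/(x-d)) := by
  rw [intervalIntegral.integral_comp_sub_left (fun t => t⁻¹) x, integral_inv h]

lemma helper_inv' (x c d : ℝ) (hcd : c ≤ d) (h : x < c ∨ d < x) :
    ∫ y in Set.Ioo c d, (x-y)⁻¹ = Real.log ((x-c)/(x-d)) := by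
  rw [← MeasureTheory.integral_Ioc_eq_integral_Ioo, ← intervalIntegral.integral_of_le hcd]
  apply helper_inv
  intro h0
  rw [Set.uIcc_of_le (by linarith)] at h0
  rcases h with h | h
  · have := h0.2; linarith
  · have := h0.1; linarith

lemma integrable_inv_sub (x c d : ℝ) (h : x ∉ Set.Icc c d) :
    MeasureTheory.IntegrableOn (fun y => (x-y)⁻¹) (Set.Ioo c d) := by
  apply MeasureTheory.IntegrableOn.mono_set (t := Set.Icc c d) _ Set.Ioo_subset_Icc_self
  apply ContinuousOn.integrableOn_Icc
  apply ContinuousOn.inv₀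
  · fun_prop
  · intro y hy h0
    exact h (by rw [show x = y by linarith [sub_eq_zero.mp h0]]; exact hy)

lemma pv_indicator (b x ε : ℝ) :
    pvIntegral ((Set.Ioo (0:ℝ) b).indicator fun _ => (1:ℝ)) x ε
      = ∫ y in {y : ℝ | ε < |x - y|} ∩ Set.Ioo 0 b, (x - y)⁻¹ := by
  rw [pvIntegral, ← MeasureTheory.setIntegral_indicator measurableSet_Ioo]
  apply MeasureTheory.integral_congr_ae
  filter_upwards with y
  by_cases hy : y ∈ Set.Ioo (0:ℝ) b
  · simp [Set.indicator_of_mem hy, one_div]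
  · simp [Set.indicator_of_notMem hy]

lemma pv_neg (b x ε : ℝ) (hb : 0 < b) (hx : x < 0) (he : 0 < ε) (hex : ε < -x) :
    pvIntegral ((Set.Ioo (0:ℝ) b).indicator fun _ => (1:ℝ)) x ε
      = Real.log (x / (x - b)) := by
  rw [pv_indicator]
  have hS : {y : ℝ | ε < |x - y|} ∩ Set.Ioo 0 b = Set.Ioo 0 b := by
    apply Set.inter_eq_right.mpr
    intro y hy
    have : |x - y| = y - x := by rw [abs_sub_comm]; exact abs_of_pos (by linarith [hy.1])
    simp only [Set.mem_setOf_eq, this]; linarith [hy.1]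
  rw [hS, helper_inv' x 0 b hb.le (Or.inl hx)]
  norm_num

lemma pv_pos (b x ε : ℝ) (hb : x < b) (hx : 0 < x) (he : 0 < ε) (he1 : ε < x) (he2 : ε < b - x) :
    pvIntegral ((Set.Ioo (0:ℝ) b).indicator fun _ => (1:ℝ)) x ε
      = Real.log (x / (b - x)) := by
  rw [pv_indicator]
  have hS : {y : ℝ | ε < |x - y|} ∩ Set.Ioo 0 b
      = Set.Ioo 0 (x - ε) ∪ Set.Ioo (x + ε) b := by
    ext y
    simp only [Set.mem_inter_iff, Set.mem_setOf_eq, Set.mem_Ioo, Set.mem_union, lt_abs,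
      neg_sub]
    constructor
    · rintro ⟨h1 | h1, h2, h3⟩
      · left; constructor <;> linarith
      · right; constructor <;> linarith
    · rintro (⟨h1, h2⟩ | ⟨h1, h2⟩)
      · exact ⟨Or.inl (by linarith), h1, by linarith⟩
      · exact ⟨Or.inr (by linarith), by linarith, h2⟩
  rw [hS, MeasureTheory.setIntegral_union (by
        rw [Set.disjoint_left]; rintro y ⟨_, h2⟩ ⟨h3, _⟩; linarith)
      measurableSet_Ioo
      (integrable_inv_sub x 0 (x - ε) (by simp; intro _; linarith))
      (integrable_inv_sub x (x + ε) b (by simp; intro h; linarith)),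
    helper_inv' x 0 (x - ε) (by linarith) (Or.inr (by linarith)),
    helper_inv' x (x + ε) b (by linarith) (Or.inl (by linarith))]
  have hε : ε ≠ 0 := he.ne'
  have hxb : x - b ≠ 0 := by intro h; rw [sub_eq_zero] at h; exact absurd h hb.ne
  have hbx : b - x ≠ 0 := by intro h; rw [sub_eq_zero] at h; exact absurd h hb.ne'
  rw [show x-(x-ε) = ε by ring, show x-(x+ε) = -ε by ring, sub_zero]
  rw [← Real.log_mul (by positivity) (div_ne_zero (by simpa using hε) hxb)]
  congr 1
  field_simp
  ring

lemma hilbert_eventually (f : ℝ → ℝ) (x L δ : ℝ) (hδ : 0 < δ)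
    (h : ∀ ε, 0 < ε → ε < δ → pvIntegral f x ε = L) :
    hilbert f x = (1 / Real.pi) * L := by
  apply Filter.Tendsto.limUnder_eq
  apply Filter.Tendsto.congr' (f₁ := fun _ => (1 / Real.pi) * L) _ tendsto_const_nhds
  filter_upwards [Ioo_mem_nhdsGT_of_mem (Set.left_mem_Ico.mpr hδ)] with ε hε
  rw [h ε hε.1 hε.2]

lemma hilbert_neg (b x : ℝ) (hb : 0 < b) (hx : x < 0) :
    hilbert ((Set.Ioo (0:ℝ) b).indicator fun _ => (1:ℝ)) x
      = (1 / Real.pi) * Real.log (x / (x - b)) :=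
  hilbert_eventually _ _ _ (-x) (by linarith)
    (fun ε he hex => pv_neg b x ε hb hx he hex)

lemma hilbert_pos (b x : ℝ) (hb : x < b) (hx : 0 < x) :
    hilbert ((Set.Ioo (0:ℝ) b).indicator fun _ => (1:ℝ)) x
      = (1 / Real.pi) * Real.log (x / (b - x)) :=
  hilbert_eventually _ _ _ (min x (b - x)) (by simp [hx]; linarith)
    (fun ε he hex => pv_pos b x ε hb hx he (lt_of_lt_of_le hex (min_le_left _ _))
      (lt_of_lt_of_le hex (min_le_right _ _)))

lemma log_ratio_lb (b ν c a : ℝ) (hb : 0 < b) (hν : 0 < ν) (hν1 : ν ≤ 1)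
    (hc : 0 < c) (hcr : c < b*ν/(2*Real.exp 2)) (ha : b/2 ≤ a) :
    1 + Real.log (1/ν) ≤ Real.log (a/c) := by
  have he : (0:ℝ) < Real.exp 2 := Real.exp_pos 2
  have ha0 : 0 < a := lt_of_lt_of_le (by linarith) ha
  have h1 : Real.exp 2 / ν ≤ a / c := by
    rw [div_le_div_iff₀ hν hc]
    have h2 : c * (2 * Real.exp 2) < b * ν := (lt_div_iff₀ (by positivity)).mp hcr
    nlinarith
  calc 1 + Real.log (1/ν) ≤ 2 + Real.log (1/ν) := by linarith
    _ = Real.log (Real.exp 2 / ν) := by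
        rw [Real.log_div (Real.exp_ne_zero 2) hν.ne', Real.log_exp, one_div, Real.log_inv]
        ring
    _ ≤ Real.log (a/c) := Real.log_le_log (by positivity) h1

lemma hilbert_lb (b ν x : ℝ) (hb : 0 < b) (hν : 0 < ν) (hν1 : ν ≤ 1)
    (hx : x ≠ 0) (hxr : |x| < b*ν/(2*Real.exp 2)) :
    (1/Real.pi) * (1 + Real.log (1/ν)) ≤
      |hilbert ((Set.Ioo (0:ℝ) b).indicator fun _ => (1:ℝ)) x| := by
  have he : (1:ℝ) ≤ Real.exp 2 := by
    rw [show (1:ℝ) = Real.exp 0 by simp]; exact Real.exp_le_exp.mpr (by norm_num)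
  have hrb : b*ν/(2*Real.exp 2) ≤ b/2 := by
    rw [div_le_div_iff₀ (by positivity) (by norm_num)]
    nlinarith
  have hπ : (0:ℝ) < Real.pi := Real.pi_pos
  have key : ∀ q : ℝ, 1 + Real.log (1/ν) ≤ Real.log q⁻¹ →
      (1/Real.pi) * (1 + Real.log (1/ν)) ≤ |(1/Real.pi) * Real.log q| := by
    intro q hq
    rw [abs_mul, abs_of_pos (by positivity : (0:ℝ) < 1/Real.pi)]
    apply mul_le_mul_of_nonneg_left _ (by positivity)
    calc 1 + Real.log (1/ν) ≤ Real.log q⁻¹ := hq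
      _ = -Real.log q := Real.log_inv q
      _ ≤ |Real.log q| := neg_le_abs _
  rcases hx.lt_or_gt with hx' | hx'
  · rw [hilbert_neg b x hb hx']
    apply key
    rw [inv_div, show (x-b)/x = (b-x)/(-x) by rw [← neg_div_neg_eq]; ring_nf]
    exact log_ratio_lb b ν (-x) (b-x) hb hν hν1 (by linarith)
      (by rwa [abs_of_neg hx'] at hxr) (by linarith)
  · have hxb : x < b := by
      calc x = |x| := (abs_of_pos hx').symm
        _ < b*ν/(2*Real.exp 2) := hxr
        _ ≤ b/2 := hrb
        _ < b := by linarith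
    rw [hilbert_pos b x hxb hx']
    apply key
    rw [inv_div]
    apply log_ratio_lb b ν x (b-x) hb hν hν1 hx'
      (by rwa [abs_of_pos hx'] at hxr)
    rw [abs_of_pos hx'] at hxr
    have : x ≤ b/2 := le_trans hxr.le hrb
    linarith

lemma u_integrableOn (u : ℝ → ℝ) (hu : IsWeight u) (a b : ℝ) :
    MeasureTheory.IntegrableOn u (Set.Ioo a b) volume := by
  apply MeasureTheory.IntegrableOn.mono_set (t := Set.Icc a b) _ Set.Ioo_subset_Icc_self
  exact hu.2.integrableOn_isCompact isCompact_Icc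

lemma wMeas_Ioo (u : ℝ → ℝ) (hu : IsWeight u) (a b : ℝ) :
    wMeas u (Set.Ioo a b) = ENNReal.ofReal (∫ s in Set.Ioo a b, u s) := by
  rw [wMeas, MeasureTheory.ofReal_integral_eq_lintegral_ofReal (u_integrableOn u hu a b)
    (Filter.Eventually.of_forall fun x => (hu.1 x).le)]

lemma uInt_pos (u : ℝ → ℝ) (hu : IsWeight u) (a b : ℝ) (hab : a < b) :
    0 < ∫ s in Set.Ioo a b, u s := by
  rw [MeasureTheory.setIntegral_pos_iff_support_of_nonneg_ae
    (Filter.Eventually.of_forall fun x => (hu.1 x).le) (u_integrableOn u hu a b)]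
  have : Function.support u ∩ Set.Ioo a b = Set.Ioo a b := by
    apply Set.inter_eq_right.mpr
    intro x _; exact (hu.1 x).ne'
  rw [this, Real.volume_Ioo]
  simp [hab]

lemma uInt_mono (u : ℝ → ℝ) (hu : IsWeight u) {s t : Set ℝ} (hst : s ⊆ t) (a b : ℝ)
    (ht : t ⊆ Set.Ioo a b) :
    ∫ x in s, u x ≤ ∫ x in t, u x := by
  apply MeasureTheory.setIntegral_mono_set ((u_integrableOn u hu a b).mono_set ht)
    (Filter.Eventually.of_forall fun x => (hu.1 x).le)
    (HasSubset.Subset.eventuallyLE hst)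

lemma Wf_nonneg (w : ℝ → ℝ) (hw : IsWeightOn w) (r : ℝ) : 0 ≤ Wf w r := by
  apply MeasureTheory.integral_nonneg_of_ae
  exact MeasureTheory.ae_restrict_of_forall_mem measurableSet_Ioo fun t ht => (hw.1 t ht.1).le

lemma Wf_mono (w : ℝ → ℝ) (hw : IsWeightOn w) {r R : ℝ} (hr : r ≤ R) (hR : 0 < R) :
    Wf w r ≤ Wf w R := by
  apply MeasureTheory.setIntegral_mono_set (hw.2 R hR)
  · exact MeasureTheory.ae_restrict_of_forall_mem measurableSet_Ioo fun t ht => (hw.1 t ht.1).le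
  · exact HasSubset.Subset.eventuallyLE (Set.Ioo_subset_Ioo le_rfl hr)

lemma Wf_ofReal (w : ℝ → ℝ) (hw : IsWeightOn w) (r : ℝ) (hr : 0 < r) :
    ENNReal.ofReal (Wf w r) = ∫⁻ t in Set.Ioo (0:ℝ) r, ENNReal.ofReal (w t) := by
  rw [Wf, MeasureTheory.ofReal_integral_eq_lintegral_ofReal (hw.2 r hr)
    (MeasureTheory.ae_restrict_of_forall_mem measurableSet_Ioo fun t ht => (hw.1 t ht.1).le)]

lemma rearr_indicator_le_one (u : ℝ → ℝ) (b t : ℝ) :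
    rearr u ((Set.Ioo (0:ℝ) b).indicator fun _ => (1:ℝ)) t ≤ 1 := by
  apply sInf_le
  have : {x : ℝ | 1 < ENNReal.ofReal |((Set.Ioo (0:ℝ) b).indicator fun _ => (1:ℝ)) x|} = ∅ := by
    ext x
    simp only [Set.mem_setOf_eq, Set.mem_empty_iff_false, iff_false, not_lt]
    by_cases hx : x ∈ Set.Ioo (0:ℝ) b
    · simp [Set.indicator_of_mem hx]
    · simp [Set.indicator_of_notMem hx]
  simp only [Set.mem_setOf_eq, this, wMeas, Measure.restrict_empty, lintegral_zero_measure]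
  exact zero_le

lemma rearr_indicator_eq_zero (u : ℝ → ℝ) (hu : IsWeight u) (b t : ℝ) (hb : 0 < b)
    (ht : ∫ s in Set.Ioo (0:ℝ) b, u s ≤ t) :
    rearr u ((Set.Ioo (0:ℝ) b).indicator fun _ => (1:ℝ)) t = 0 := by
  apply le_antisymm _ zero_le
  apply sInf_le
  simp only [Set.mem_setOf_eq]
  have hsub : {x : ℝ | 0 < ENNReal.ofReal |((Set.Ioo (0:ℝ) b).indicator fun _ => (1:ℝ)) x|}
      ⊆ Set.Ioo 0 b := by
    intro x hx
    by_contra hc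
    simp [Set.indicator_of_notMem hc] at hx
    exact hc (Set.mem_Ioo.mpr hx)
  calc wMeas u _ ≤ wMeas u (Set.Ioo 0 b) := lintegral_mono_set hsub
    _ = ENNReal.ofReal (∫ s in Set.Ioo (0:ℝ) b, u s) := wMeas_Ioo u hu 0 b
    _ ≤ ENNReal.ofReal t := ENNReal.ofReal_le_ofReal ht

lemma lorentz_indicator_le (p : ℝ) (hp : 0 < p) (u w : ℝ → ℝ) (hu : IsWeight u)
    (hw : IsWeightOn w) (b : ℝ) (hb : 0 < b) :
    lorentzNorm p u w ((Set.Ioo (0:ℝ) b).indicator fun _ => (1:ℝ))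
      ≤ ENNReal.ofReal (Wf w (∫ s in Set.Ioo (0:ℝ) b, u s)) ^ (1/p) := by
  set m := ∫ s in Set.Ioo (0:ℝ) b, u s with hm
  have hm0 : 0 < m := uInt_pos u hu 0 b hb
  apply ENNReal.rpow_le_rpow _ (by positivity)
  rw [Wf_ofReal w hw m hm0]
  have key : ∀ t ∈ Set.Ioi (0:ℝ),
      rearr u ((Set.Ioo (0:ℝ) b).indicator fun _ => (1:ℝ)) t ^ p * ENNReal.ofReal (w t)
        ≤ (Set.Ioo (0:ℝ) m).indicator (fun t => ENNReal.ofReal (w t)) t := by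
    intro t ht
    by_cases htm : t < m
    · rw [Set.indicator_of_mem (Set.mem_Ioo.mpr ⟨ht, htm⟩)]
      calc _ ≤ (1:ℝ≥0∞) ^ p * ENNReal.ofReal (w t) :=
            mul_le_mul_left (ENNReal.rpow_le_rpow (rearr_indicator_le_one u b t) hp.le) _
        _ = ENNReal.ofReal (w t) := by rw [ENNReal.one_rpow, one_mul]
    · rw [rearr_indicator_eq_zero u hu b t hb (by linarith), ENNReal.zero_rpow_of_pos hp,
        zero_mul]
      exact zero_le
  calc (∫⁻ t in Set.Ioi (0:ℝ), rearrE u _ t ^ p * ENNReal.ofReal (w t))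
      ≤ ∫⁻ t in Set.Ioi (0:ℝ), (Set.Ioo (0:ℝ) m).indicator (fun t => ENNReal.ofReal (w t)) t :=
        lintegral_mono_ae (ae_restrict_of_forall_mem measurableSet_Ioi key)
    _ = ∫⁻ t in Set.Ioo (0:ℝ) m, ENNReal.ofReal (w t) := by
        rw [lintegral_indicator measurableSet_Ioo, Measure.restrict_restrict measurableSet_Ioo,
          Set.inter_eq_left.mpr (fun t ht => ht.1)]

lemma weak_lower (p : ℝ) (u w : ℝ → ℝ) (g : ℝ → ℝ≥0∞) (E : Set ℝ) (s₀ : ℝ≥0∞)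
    (hg : ∀ x ∈ E, s₀ ≤ g x) (A t₀ : ℝ) (hwA : ENNReal.ofReal A ≤ wMeas u E)
    (ht₀ : 0 < t₀) (htA : t₀ < A) :
    ENNReal.ofReal (Wf w t₀) ^ (1/p) * s₀ ≤ weakLorentzNormE p u w g := by
  have h1 : s₀ ≤ rearrE u g t₀ := by
    apply le_sInf
    intro s hs
    by_contra hc
    push_neg at hc
    have hEs : E ⊆ {x | s < g x} := fun x hx => lt_of_lt_of_le hc (hg x hx)
    have h2 : ENNReal.ofReal A ≤ ENNReal.ofReal t₀ :=
      le_trans hwA (le_trans (lintegral_mono_set hEs) hs)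
    rw [ENNReal.ofReal_le_ofReal_iff ht₀.le] at h2
    linarith
  calc ENNReal.ofReal (Wf w t₀) ^ (1/p) * s₀
      ≤ ENNReal.ofReal (Wf w t₀) ^ (1/p) * rearrE u g t₀ := mul_le_mul_right h1 _
    _ ≤ weakLorentzNormE p u w g := by
        apply le_biSup (f := fun t => ENNReal.ofReal (Wf w t) ^ (1/p) * rearrE u g t)
        exact ht₀

lemma core_ineq (p : ℝ) (hp : 0 < p) (u w : ℝ → ℝ) (hu : IsWeight u) (hw : IsWeightOn w)
    (C : ℝ) (hC : 0 < C)
    (hyp : ∀ b : ℝ, 0 < b →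
      weakLorentzNorm p u w (hilbert ((Set.Ioo (0:ℝ) b).indicator fun _ => (1:ℝ)))
        ≤ ENNReal.ofReal C * lorentzNorm p u w ((Set.Ioo (0:ℝ) b).indicator fun _ => (1:ℝ)))
    (ν : ℝ) (hν : 0 < ν) (hν1 : ν ≤ 1) (b : ℝ) (hb : 0 < b) :
    Wf w (∫ s in Set.Ioo (-(b*ν/(2*Real.exp 2)/2)) (b*ν/(2*Real.exp 2)/2), u s)
        * (1/Real.pi * (1 + Real.log (1/ν))) ^ p
      ≤ C ^ p * Wf w (∫ s in Set.Ioo (-b) b, u s) := by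
  have hπ := Real.pi_pos
  have he : (0:ℝ) < Real.exp 2 := Real.exp_pos 2
  set r := b*ν/(2*Real.exp 2) with hr
  have hr0 : 0 < r := by positivity
  set t₀ := ∫ s in Set.Ioo (-(r/2)) (r/2), u s with ht₀def
  set A := ∫ s in Set.Ioo (-r) r, u s with hAdef
  set R := ∫ s in Set.Ioo (-b) b, u s with hRdef
  set m := ∫ s in Set.Ioo (0:ℝ) b, u s with hmdef
  set L := Real.log (1/ν) with hLdef
  have hL : 0 ≤ L := Real.log_nonneg ((le_div_iff₀ hν).mpr (by linarith))
  have ht0 : 0 < t₀ := uInt_pos u hu _ _ (by linarith)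
  have hR0 : 0 < R := uInt_pos u hu _ _ (by linarith)
  have htA : t₀ < A := by
    have hdisj : Disjoint (Set.Ioo (-(r/2)) (r/2)) (Set.Ioo (r/2) r) := by
      rw [Set.disjoint_left]
      rintro x ⟨_, h2⟩ ⟨h3, _⟩
      linarith
    have h1 : t₀ + (∫ s in Set.Ioo (r/2) r, u s)
        = ∫ s in Set.Ioo (-(r/2)) (r/2) ∪ Set.Ioo (r/2) r, u s :=
      (MeasureTheory.setIntegral_union hdisj measurableSet_Ioo
        (u_integrableOn u hu _ _) (u_integrableOn u hu _ _)).symm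
    have h2 : (∫ s in Set.Ioo (-(r/2)) (r/2) ∪ Set.Ioo (r/2) r, u s) ≤ A := by
      apply uInt_mono u hu _ (-r) r (fun x hx => hx)
      rintro x (hx | hx) <;> constructor <;> simp only [Set.mem_Ioo] at hx <;> linarith [hx.1, hx.2]
    have h3 : 0 < ∫ s in Set.Ioo (r/2) r, u s := uInt_pos u hu _ _ (by linarith)
    linarith
  set E := Set.Ioo (-r) 0 ∪ Set.Ioo (0:ℝ) r with hEdef
  have hwA : ENNReal.ofReal A ≤ wMeas u E := by
    have hae : Set.Ioo (-r) r =ᵐ[volume] E := by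
      apply MeasureTheory.ae_eq_set.mpr
      constructor
      · apply measure_mono_null (t := {(0:ℝ)}) _ (measure_singleton 0)
        rintro x ⟨hx1, hx2⟩
        simp only [Set.mem_singleton_iff]
        by_contra hne
        simp only [Set.mem_Ioo] at hx1
        rcases lt_or_gt_of_ne hne with h | h
        · exact hx2 (Or.inl ⟨hx1.1, h⟩)
        · exact hx2 (Or.inr ⟨h, hx1.2⟩)
      · rw [Set.diff_eq_empty.mpr, measure_empty]
        rintro x (hx | hx) <;> simp only [Set.mem_Ioo] at hx ⊢ <;> constructor <;> linarith [hx.1, hx.2]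
    have : wMeas u E = wMeas u (Set.Ioo (-r) r) := by
      rw [wMeas, wMeas, Measure.restrict_congr_set hae]
    rw [this, wMeas_Ioo u hu]
  have hg : ∀ x ∈ E, ENNReal.ofReal (1/Real.pi * (1 + L)) ≤
      ENNReal.ofReal |hilbert ((Set.Ioo (0:ℝ) b).indicator fun _ => (1:ℝ)) x| := by
    rintro x (hx | hx) <;> simp only [Set.mem_Ioo] at hx
    · exact ENNReal.ofReal_le_ofReal (hilbert_lb b ν x hb hν hν1 (by linarith [hx.2])
        (by rw [abs_of_neg hx.2]; linarith [hx.1]))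
    · exact ENNReal.ofReal_le_ofReal (hilbert_lb b ν x hb hν hν1 (by linarith [hx.1])
        (by rw [abs_of_pos hx.1]; exact hx.2))
  have w1 : ENNReal.ofReal (Wf w t₀) ^ (1/p) * ENNReal.ofReal (1/Real.pi * (1 + L))
      ≤ weakLorentzNorm p u w (hilbert ((Set.Ioo (0:ℝ) b).indicator fun _ => (1:ℝ))) :=
    weak_lower p u w _ E _ hg A t₀ hwA ht0 htA
  have hmR : m ≤ R := by
    apply uInt_mono u hu _ (-b-1) (b+1)
    · intro x hx; simp only [Set.mem_Ioo] at hx ⊢; constructor <;> linarith [hx.1, hx.2]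
    · intro x hx; simp only [Set.mem_Ioo] at hx ⊢; constructor <;> linarith [hx.1, hx.2]
  have chain : ENNReal.ofReal (Wf w t₀) ^ (1/p) * ENNReal.ofReal (1/Real.pi * (1 + L))
      ≤ ENNReal.ofReal C * ENNReal.ofReal (Wf w R) ^ (1/p) := by
    calc _ ≤ weakLorentzNorm p u w (hilbert ((Set.Ioo (0:ℝ) b).indicator fun _ => (1:ℝ))) := w1
      _ ≤ ENNReal.ofReal C * lorentzNorm p u w ((Set.Ioo (0:ℝ) b).indicator fun _ => (1:ℝ)) :=
          hyp b hb
      _ ≤ ENNReal.ofReal C * ENNReal.ofReal (Wf w m) ^ (1/p) :=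
          mul_le_mul_right (lorentz_indicator_le p hp u w hu hw b hb) _
      _ ≤ _ := mul_le_mul_right (ENNReal.rpow_le_rpow
          (ENNReal.ofReal_le_ofReal (Wf_mono w hw hmR hR0)) (by positivity)) _
  have chain2 := ENNReal.rpow_le_rpow chain hp.le
  rw [ENNReal.mul_rpow_of_nonneg _ _ hp.le, ENNReal.mul_rpow_of_nonneg _ _ hp.le,
    ← ENNReal.rpow_mul, ← ENNReal.rpow_mul, one_div_mul_cancel hp.ne', ENNReal.rpow_one,
    ENNReal.rpow_one, ENNReal.ofReal_rpow_of_nonneg (by positivity) hp.le,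
    ENNReal.ofReal_rpow_of_nonneg hC.le hp.le,
    ← ENNReal.ofReal_mul (Wf_nonneg w hw _), ← ENNReal.ofReal_mul (by positivity)] at chain2
  rw [ENNReal.ofReal_le_ofReal_iff
    (mul_nonneg (Real.rpow_nonneg hC.le p) (Wf_nonneg w hw _))] at chain2
  exact chain2

/-- the weak-type inequality on characteristic functions of intervals `(0,b)`
implies the logarithmic estimate for `W ∘ u`. -/
theorem log_estimate_of_weak_type (p : ℝ) (hp : 0 < p) (u w : ℝ → ℝ)
    (hu : IsWeight u) (hw : IsWeightOn w)
    (h : ∃ C : ℝ, 0 < C ∧ ∀ b : ℝ, 0 < b →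
      weakLorentzNorm p u w (hilbert ((Set.Ioo (0:ℝ) b).indicator fun _ => (1:ℝ)))
        ≤ ENNReal.ofReal C * lorentzNorm p u w ((Set.Ioo (0:ℝ) b).indicator fun _ => (1:ℝ))) :
    ∃ C' : ℝ, 0 < C' ∧ ∀ ν : ℝ, ν ∈ Set.Ioc (0:ℝ) 1 → ∀ b : ℝ, 0 < b →
      Wf w (∫ s in Set.Ioo (-(b*ν)) (b*ν), u s)
        ≤ C' * (1 + Real.log (1/ν)) ^ (-p) * Wf w (∫ s in Set.Ioo (-b) b, u s) := by
  obtain ⟨C, hC, hyp⟩ := h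
  have hπ := Real.pi_pos
  have he : (0:ℝ) < Real.exp 2 := Real.exp_pos 2
  refine ⟨max (C^p * (5*Real.pi)^p) (5^p), lt_max_of_lt_right (Real.rpow_pos_of_pos (by norm_num) p), ?_⟩
  rintro ν ⟨hν0, hν1⟩ b hb
  set C' := max (C^p * (5*Real.pi)^p) (5^p) with hC'
  set L := Real.log (1/ν) with hLdef
  have hL : 0 ≤ L := Real.log_nonneg ((le_div_iff₀ hν0).mpr (by linarith))
  set K := 4 * Real.exp 2 with hKdef
  have hK1 : 1 < K := by nlinarith [Real.exp_one_gt_d9, Real.exp_le_exp.mpr (by norm_num : (1:ℝ) ≤ 2), Real.one_le_exp (by norm_num : (0:ℝ) ≤ 2)]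
  have hlogK : Real.log K ≤ 4 := by
    rw [hKdef, Real.log_mul (by norm_num) he.ne', Real.log_exp]
    have h4 : Real.log 4 = 2 * Real.log 2 := by
      rw [show (4:ℝ) = 2^2 by norm_num, Real.log_pow]; push_cast; ring
    have := Real.log_two_lt_d9
    rw [h4]; linarith
  have hLpow_pos : 0 < (1+L)^p := Real.rpow_pos_of_pos (by linarith) p
  have hLneg : (1+L) ^ (-p) = ((1+L)^p)⁻¹ := Real.rpow_neg (by linarith) p
  set R := ∫ s in Set.Ioo (-b) b, u s with hRdef
  have hR0 : 0 < R := uInt_pos u hu _ _ (by linarith)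
  have hWR : 0 ≤ Wf w R := Wf_nonneg w hw R
  by_cases hcase : ν * K ≤ 1
  · have hνK : 0 < ν * K := by positivity
    have core := core_ineq p hp u w hu hw C hC hyp (ν*K) hνK hcase b hb
    have hrad : b*(ν*K)/(2*Real.exp 2)/2 = b*ν := by
      rw [hKdef]; field_simp; ring
    rw [hrad] at core
    set X := Wf w (∫ s in Set.Ioo (-(b*ν)) (b*ν), u s) with hXdef
    have hLK : Real.log (1/(ν*K)) = L - Real.log K := by
      rw [one_div, Real.log_inv, Real.log_mul hν0.ne' (by linarith), hLdef, one_div,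
        Real.log_inv]
      ring
    have hKL : Real.log K ≤ L := by
      rw [hLdef]
      calc Real.log K ≤ Real.log (1/ν) := by
            apply Real.log_le_log (by linarith)
            rw [le_div_iff₀ hν0]; linarith [mul_comm ν K]
        _ = L := rfl
    set c := 1 + Real.log (1/(ν*K)) with hcdef
    have hc5 : (1+L)/5 ≤ c := by rw [hcdef, hLK]; linarith
    have hc0 : 0 < c := by rw [hcdef, hLK]; linarith
    -- core : X * (1/π * c)^p ≤ C^p * Wf w R
    have hcp : 0 < (1/Real.pi * c)^p := Real.rpow_pos_of_pos (by positivity) p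
    have hX : X ≤ C^p * Wf w R / (1/Real.pi * c)^p := (le_div_iff₀ hcp).mpr core
    have hbase : (1+L)/(5*Real.pi) ≤ 1/Real.pi * c := by
      rw [div_le_iff₀ (by positivity)] at hc5 ⊢
      calc (1+L) ≤ c * 5 := hc5
        _ = (1/Real.pi * c) * (5*Real.pi) := by field_simp
    have hmono : ((1+L)/(5*Real.pi))^p ≤ (1/Real.pi * c)^p :=
      Real.rpow_le_rpow (by positivity) hbase hp.le
    have h2 : C^p * Wf w R / (1/Real.pi * c)^p ≤ C^p * Wf w R / ((1+L)/(5*Real.pi))^p := by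
      apply div_le_div_of_nonneg_left (by positivity) (Real.rpow_pos_of_pos (by positivity) p) hmono
    have h3 : C^p * Wf w R / ((1+L)/(5*Real.pi))^p
        = (C^p * (5*Real.pi)^p) * (1+L)^(-p) * Wf w R := by
      rw [Real.div_rpow (by linarith) (by positivity), hLneg]
      field_simp
    have h4 : (C^p * (5*Real.pi)^p) * (1+L)^(-p) * Wf w R ≤ C' * (1+L)^(-p) * Wf w R := by
      apply mul_le_mul_of_nonneg_right _ hWR
      apply mul_le_mul_of_nonneg_right (le_max_left _ _) (by rw [hLneg]; positivity)
    linarith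
  · push_neg at hcase
    have hL5 : 1 + L ≤ 5 := by
      have : L < Real.log K := by
        rw [hLdef]
        apply Real.log_lt_log (by positivity)
        rw [div_lt_iff₀ hν0]; linarith [mul_comm ν K]
      linarith
    have hX : Wf w (∫ s in Set.Ioo (-(b*ν)) (b*ν), u s) ≤ Wf w R := by
      apply Wf_mono w hw _ hR0
      apply uInt_mono u hu _ (-b-1) (b+1)
      all_goals
        intro x hx; simp only [Set.mem_Ioo] at hx ⊢
        have hbν : b * ν ≤ b := mul_le_of_le_one_right hb.le hν1
        constructor <;> linarith [hx.1, hx.2]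
    have h5 : (1:ℝ) ≤ C' * (1+L)^(-p) := by
      have h6 : (1+L)^p ≤ 5^p := Real.rpow_le_rpow (by linarith) hL5 hp.le
      have h7 : (5:ℝ)^p ≤ C' := le_max_right _ _
      rw [hLneg]
      calc (1:ℝ) = (1+L)^p * ((1+L)^p)⁻¹ := (mul_inv_cancel₀ hLpow_pos.ne').symm
        _ ≤ C' * ((1+L)^p)⁻¹ :=
            mul_le_mul_of_nonneg_right (le_trans h6 h7) (by positivity)
    calc Wf w (∫ s in Set.Ioo (-(b*ν)) (b*ν), u s) ≤ Wf w R := hX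
      _ = 1 * Wf w R := (one_mul _).symm
      _ ≤ (C' * (1+L)^(-p)) * Wf w R := mul_le_mul_of_nonneg_right h5 hWR
      _ = C' * (1+L)^(-p) * Wf w R := by ring
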